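/- Let R = K[X,Y,U,V]/(XY − UV) where K is a field. Then the images x, y, u+v of X, Y, U+V in R form a regular sequence on R. -/

import Mathlib

open MvPolynomial

/-- `a_1, ..., a_r` is a regular sequence on `R`: each `a_i` is a non-zerodivisor on
`R/(a_1,...,a_{i-1})`, and `R/(a_1,...,a_r) ≠ 0`. -/
def IsRegularSeq (R : Type*) [CommRing R] (xs : List R) : Prop :=
  (∀ i : Fin xs.length,
    IsSMulRegular (R ⧸ Ideal.span {a | a ∈ xs.take (i : ℕ)}) (xs.get i)) ∧
  Nontrivial (R ⧸ Ideal.span {a | a ∈ xs})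

/-- `R = K[X,Y,U,V]/(XY - UV)`. -/
noncomputable abbrev hypersurfaceRing (K : Type) [Field K] : Type :=
  MvPolynomial (Fin 4) K ⧸
    Ideal.span {(X 0 : MvPolynomial (Fin 4) K) * X 1 - X 2 * X 3}


section Aux

variable {K : Type} [Field K]

-- X i is prime in MvPolynomial (Fin (n+1)) K
lemma primeX {n : ℕ} (i : Fin (n+1)) : Prime (X i : MvPolynomial (Fin (n+1)) K) := by
  let e := (renameEquiv K (Equiv.swap i 0)).trans (finSuccEquiv K n)
  rw [← MulEquiv.prime_iff e.toMulEquiv]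
  have : e (X i) = Polynomial.X := by
    simp [e, AlgEquiv.trans_apply, renameEquiv_apply, rename_X, Equiv.swap_apply_left,
      finSuccEquiv_X_zero]
  rw [show (e.toMulEquiv : MvPolynomial (Fin (n+1)) K → _) = e from rfl, this]
  exact Polynomial.prime_X

lemma X_not_dvd_X {n : ℕ} {i j : Fin n} (h : j ≠ i) : ¬ (X i : MvPolynomial (Fin n) K) ∣ X j := by
  rintro ⟨c, hc⟩
  have := congrArg (eval (fun k => if k = i then (0:K) else 1)) hc
  simp [h] at this

-- polynomial lemma for L1
lemma poly_cancel {A : Type*} [CommRing A] [IsDomain A] (a b : A) (hb : b ≠ 0)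
    (F Q : Polynomial A) (h : Polynomial.X * F = (Polynomial.X * Polynomial.C a - Polynomial.C b) * Q) :
    ∃ Q', F = (Polynomial.X * Polynomial.C a - Polynomial.C b) * Q' := by
  have h0 : Q.coeff 0 = 0 := by
    have := congrArg (fun p => Polynomial.coeff p 0) h
    simp [Polynomial.mul_coeff_zero] at this
    rcases this with h' | h'
    · exact absurd h' hb
    · exact h'
  obtain ⟨Q', rfl⟩ := Polynomial.X_dvd_iff.2 h0
  refine ⟨Q', mul_left_cancel₀ Polynomial.X_ne_zero ?_⟩
  rw [h]; ring

-- L1 : X0 regular mod (p)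
lemma L1 (f : MvPolynomial (Fin 4) K)
    (h : (X 0 : MvPolynomial (Fin 4) K) * f ∈ Ideal.span {(X 0 : MvPolynomial (Fin 4) K) * X 1 - X 2 * X 3}) :
    f ∈ Ideal.span {(X 0 : MvPolynomial (Fin 4) K) * X 1 - X 2 * X 3} := by
  rw [Ideal.mem_span_singleton] at h ⊢
  obtain ⟨q, hq⟩ := h
  let e := finSuccEquiv K 3
  have e1 : e (X 1) = Polynomial.C (X 0) := by
    rw [show (1 : Fin 4) = Fin.succ 0 from rfl, finSuccEquiv_X_succ]
  have e2 : e (X 2) = Polynomial.C (X 1) := by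
    rw [show (2 : Fin 4) = Fin.succ 1 from rfl, finSuccEquiv_X_succ]
  have e3 : e (X 3) = Polynomial.C (X 2) := by
    rw [show (3 : Fin 4) = Fin.succ 2 from rfl, finSuccEquiv_X_succ]
  have ep : e ((X 0 : MvPolynomial (Fin 4) K) * X 1 - X 2 * X 3)
      = Polynomial.X * Polynomial.C (X 0) - Polynomial.C ((X 1 : MvPolynomial (Fin 3) K) * X 2) := by
    rw [map_sub, map_mul, map_mul, finSuccEquiv_X_zero, e1, e2, e3, map_mul]
  have hq' : Polynomial.X * e f
      = (Polynomial.X * Polynomial.C (X 0) - Polynomial.C ((X 1 : MvPolynomial (Fin 3) K) * X 2)) * e q := by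
    have := congrArg e hq
    rw [map_mul, map_mul, finSuccEquiv_X_zero, ep] at this
    exact this
  obtain ⟨Q', hQ'⟩ := poly_cancel _ _ (mul_ne_zero (X_ne_zero (1 : Fin 3)) (X_ne_zero (2 : Fin 3))) (e f) (e q) hq'
  refine ⟨e.symm Q', ?_⟩
  apply e.injective
  rw [map_mul, ep, AlgEquiv.apply_symm_apply, hQ']

lemma sub_aeval_mem (I : Ideal (MvPolynomial (Fin 4) K)) (b : Fin 4 → MvPolynomial (Fin 4) K)
    (hb : ∀ i, X i - b i ∈ I) (f : MvPolynomial (Fin 4) K) :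
    f - aeval b f ∈ I := by
  induction f using MvPolynomial.induction_on with
  | C a => simp [MvPolynomial.algebraMap_eq]
  | add f g hf hg =>
      have : f + g - aeval b (f + g) = (f - aeval b f) + (g - aeval b g) := by
        rw [map_add]; ring
      rw [this]; exact I.add_mem hf hg
  | mul_X f i hf =>
      have : f * X i - aeval b (f * X i)
          = (f - aeval b f) * X i + aeval b f * (X i - b i) := by
        rw [map_mul, aeval_X]; ring
      rw [this]
      exact I.add_mem (I.mul_mem_right _ hf) (I.mul_mem_left _ (hb i))

-- φ kills X0
noncomputable def phi (K : Type) [Field K] : MvPolynomial (Fin 4) K →ₐ[K] MvPolynomial (Fin 4) K :=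
  aeval (fun i => if i = 0 then 0 else X i)

noncomputable def psi (K : Type) [Field K] : MvPolynomial (Fin 4) K →ₐ[K] MvPolynomial (Fin 4) K :=
  aeval (fun i => if i = 0 ∨ i = 1 then 0 else X i)

-- span equalities
lemma span_eq2 : Ideal.span ({(X 0 : MvPolynomial (Fin 4) K) * X 1 - X 2 * X 3, X 0} : Set _)
    = Ideal.span {X 0, (X 2 : MvPolynomial (Fin 4) K) * X 3} := by
  apply le_antisymm <;> rw [Ideal.span_le] <;> rintro g (rfl | rfl)
  · have h1 : (X 0 : MvPolynomial (Fin 4) K) ∈ Ideal.span ({X 0, X 2 * X 3} : Set _) :=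
      Ideal.subset_span (by simp)
    have h2 : (X 2 : MvPolynomial (Fin 4) K) * X 3 ∈ Ideal.span ({X 0, X 2 * X 3} : Set _) :=
      Ideal.subset_span (by simp)
    have : (X 0 : MvPolynomial (Fin 4) K) * X 1 - X 2 * X 3
        = X 1 * X 0 - X 2 * X 3 := by ring
    rw [this]
    exact Ideal.sub_mem _ (Ideal.mul_mem_left _ _ h1) h2
  · exact Ideal.subset_span (by simp)
  · exact Ideal.subset_span (by simp)
  · have h1 : (X 0 : MvPolynomial (Fin 4) K) * X 1 - X 2 * X 3
        ∈ Ideal.span ({X 0 * X 1 - X 2 * X 3, X 0} : Set (MvPolynomial (Fin 4) K)) :=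
      Ideal.subset_span (by simp)
    have h2 : (X 0 : MvPolynomial (Fin 4) K)
        ∈ Ideal.span ({X 0 * X 1 - X 2 * X 3, X 0} : Set (MvPolynomial (Fin 4) K)) :=
      Ideal.subset_span (by simp)
    have h3 := Ideal.sub_mem _ (Ideal.mul_mem_left _ (X 1) h2) h1
    have e : (X 1 : MvPolynomial (Fin 4) K) * X 0 - (X 0 * X 1 - X 2 * X 3) = X 2 * X 3 := by ring
    rwa [e] at h3

lemma span_eq3 : Ideal.span ({(X 0 : MvPolynomial (Fin 4) K) * X 1 - X 2 * X 3, X 0, X 1} : Set _)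
    = Ideal.span {X 0, X 1, (X 2 : MvPolynomial (Fin 4) K) * X 3} := by
  apply le_antisymm <;> rw [Ideal.span_le] <;> rintro g (rfl | rfl | rfl)
  · have h1 : (X 0 : MvPolynomial (Fin 4) K) ∈ Ideal.span ({X 0, X 1, X 2 * X 3} : Set _) :=
      Ideal.subset_span (by simp)
    have h2 : (X 2 : MvPolynomial (Fin 4) K) * X 3 ∈ Ideal.span ({X 0, X 1, X 2 * X 3} : Set _) :=
      Ideal.subset_span (by simp)
    have : (X 0 : MvPolynomial (Fin 4) K) * X 1 - X 2 * X 3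
        = X 1 * X 0 - X 2 * X 3 := by ring
    rw [this]
    exact Ideal.sub_mem _ (Ideal.mul_mem_left _ _ h1) h2
  · exact Ideal.subset_span (by simp)
  · exact Ideal.subset_span (by simp)
  · exact Ideal.subset_span (by simp)
  · exact Ideal.subset_span (by simp)
  · have h1 : (X 0 : MvPolynomial (Fin 4) K) * X 1 - X 2 * X 3
        ∈ Ideal.span ({X 0 * X 1 - X 2 * X 3, X 0, X 1} : Set (MvPolynomial (Fin 4) K)) :=
      Ideal.subset_span (by simp)
    have h2 : (X 0 : MvPolynomial (Fin 4) K)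
        ∈ Ideal.span ({X 0 * X 1 - X 2 * X 3, X 0, X 1} : Set (MvPolynomial (Fin 4) K)) :=
      Ideal.subset_span (by simp)
    have h3 := Ideal.sub_mem _ (Ideal.mul_mem_left _ (X 1) h2) h1
    have e : (X 1 : MvPolynomial (Fin 4) K) * X 0 - (X 0 * X 1 - X 2 * X 3) = X 2 * X 3 := by ring
    rwa [e] at h3

lemma X_not_dvd_add : ¬ (X 2 : MvPolynomial (Fin 4) K) ∣ (X 2 + X 3) := by
  intro h
  have : (X 2 : MvPolynomial (Fin 4) K) ∣ X 3 := (dvd_add_right dvd_rfl).mp h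
  exact X_not_dvd_X (by decide) this

lemma X3_not_dvd_add : ¬ (X 3 : MvPolynomial (Fin 4) K) ∣ (X 2 + X 3) := by
  intro h
  have : (X 3 : MvPolynomial (Fin 4) K) ∣ X 2 := (dvd_add_left dvd_rfl).mp h
  exact X_not_dvd_X (by decide) this

lemma L2 (f : MvPolynomial (Fin 4) K)
    (h : (X 1 : MvPolynomial (Fin 4) K) * f
      ∈ Ideal.span ({X 0 * X 1 - X 2 * X 3, X 0} : Set (MvPolynomial (Fin 4) K))) :
    f ∈ Ideal.span ({X 0 * X 1 - X 2 * X 3, X 0} : Set (MvPolynomial (Fin 4) K)) := by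
  rw [span_eq2] at h ⊢
  set b2 : Fin 4 → MvPolynomial (Fin 4) K := fun i => if i = 0 then 0 else X i with hb2
  let ph : MvPolynomial (Fin 4) K →ₐ[K] MvPolynomial (Fin 4) K := aeval b2
  have e0 : ph (X (0 : Fin 4)) = 0 := by simp [hb2, ph]
  have e1 : ph (X (1 : Fin 4)) = X 1 := by simp [hb2, ph]
  have e2 : ph (X (2 : Fin 4)) = X 2 := by simp [hb2, ph]
  have e3 : ph (X (3 : Fin 4)) = X 3 := by simp [hb2, ph]
  obtain ⟨a, c, hac⟩ := Ideal.mem_span_pair.mp h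
  have key : (X 1 : MvPolynomial (Fin 4) K) * ph f = ph c * (X 2 * X 3) := by
    have := congrArg ph hac
    rw [map_add, map_mul, map_mul, map_mul, map_mul, e0, e1, e2, e3] at this
    linear_combination -this
  have h2 : (X 2 : MvPolynomial (Fin 4) K) ∣ X 1 * ph f :=
    ⟨ph c * X 3, by linear_combination key⟩
  have hf2 : (X 2 : MvPolynomial (Fin 4) K) ∣ ph f :=
    ((primeX 2).2.2 _ _ h2).resolve_left (X_not_dvd_X (by decide))
  obtain ⟨g, hg⟩ := hf2
  have key2 : (X 1 : MvPolynomial (Fin 4) K) * g = ph c * X 3 := by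
    apply mul_left_cancel₀ (X_ne_zero (2 : Fin 4))
    rw [hg] at key; linear_combination key
  have h3 : (X 3 : MvPolynomial (Fin 4) K) ∣ X 1 * g := ⟨ph c, by linear_combination key2⟩
  have hg3 : (X 3 : MvPolynomial (Fin 4) K) ∣ g :=
    ((primeX 3).2.2 _ _ h3).resolve_left (X_not_dvd_X (by decide))
  obtain ⟨g', hg'⟩ := hg3
  have heq : ph f = (X 2 * X 3) * g' := by rw [hg, hg']; ring
  have hmem : ph f ∈ Ideal.span ({X 0, X 2 * X 3} : Set (MvPolynomial (Fin 4) K)) := by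
    rw [heq]
    exact Ideal.mul_mem_right _ _ (Ideal.subset_span (by simp))
  have hsub : f - ph f ∈ Ideal.span ({X 0, X 2 * X 3} : Set (MvPolynomial (Fin 4) K)) := by
    apply sub_aeval_mem
    intro i
    fin_cases i
    · simpa [hb2] using Ideal.subset_span (s := ({X 0, X 2 * X 3} : Set (MvPolynomial (Fin 4) K)))
        (show (X 0 : MvPolynomial (Fin 4) K) ∈ _ by simp)
    all_goals simp [hb2, ph]
  have := Ideal.add_mem _ hsub hmem
  simpa using this

lemma mem_span_triple {R : Type*} [CommRing R] {x y z w : R} :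
    w ∈ Ideal.span ({x, y, z} : Set R) ↔ ∃ a b c, w = a * x + b * y + c * z := by
  rw [show ({x, y, z} : Set R) = insert x (insert y {z}) from rfl]
  rw [Ideal.mem_span_insert]
  constructor
  · rintro ⟨a, t, ht, rfl⟩
    rw [Ideal.mem_span_insert] at ht
    obtain ⟨b, u, hu, rfl⟩ := ht
    rw [Ideal.mem_span_singleton'] at hu
    obtain ⟨c, rfl⟩ := hu
    exact ⟨a, b, c, by ring⟩
  · rintro ⟨a, b, c, rfl⟩
    exact ⟨a, b * y + c * z, Ideal.mem_span_insert.2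
      ⟨b, c * z, Ideal.mem_span_singleton'.2 ⟨c, rfl⟩, by ring⟩, by ring⟩

lemma L3 (f : MvPolynomial (Fin 4) K)
    (h : ((X 2 : MvPolynomial (Fin 4) K) + X 3) * f
      ∈ Ideal.span ({X 0 * X 1 - X 2 * X 3, X 0, X 1} : Set (MvPolynomial (Fin 4) K))) :
    f ∈ Ideal.span ({X 0 * X 1 - X 2 * X 3, X 0, X 1} : Set (MvPolynomial (Fin 4) K)) := by
  rw [span_eq3] at h ⊢
  set b3 : Fin 4 → MvPolynomial (Fin 4) K := fun i => if i = 0 ∨ i = 1 then 0 else X i with hb3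
  let ps : MvPolynomial (Fin 4) K →ₐ[K] MvPolynomial (Fin 4) K := aeval b3
  have e0 : ps (X (0 : Fin 4)) = 0 := by simp [hb3, ps]
  have e1 : ps (X (1 : Fin 4)) = 0 := by simp [hb3, ps]
  have e2 : ps (X (2 : Fin 4)) = X 2 := by simp [hb3, ps]
  have e3 : ps (X (3 : Fin 4)) = X 3 := by simp [hb3, ps]
  obtain ⟨a, b, c, hac⟩ := mem_span_triple.mp h
  have key : ((X 2 : MvPolynomial (Fin 4) K) + X 3) * ps f = ps c * (X 2 * X 3) := by
    have := congrArg ps hac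
    rw [map_mul, map_add, map_add, map_add, map_mul, map_mul, map_mul, map_mul,
      e0, e1, e2, e3] at this
    linear_combination this
  have h2 : (X 2 : MvPolynomial (Fin 4) K) ∣ (X 2 + X 3) * ps f :=
    ⟨ps c * X 3, by linear_combination key⟩
  have hf2 : (X 2 : MvPolynomial (Fin 4) K) ∣ ps f :=
    ((primeX 2).2.2 _ _ h2).resolve_left X_not_dvd_add
  obtain ⟨g, hg⟩ := hf2
  have key2 : ((X 2 : MvPolynomial (Fin 4) K) + X 3) * g = ps c * X 3 := by
    apply mul_left_cancel₀ (X_ne_zero (2 : Fin 4))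
    rw [hg] at key; linear_combination key
  have h3 : (X 3 : MvPolynomial (Fin 4) K) ∣ (X 2 + X 3) * g := ⟨ps c, by linear_combination key2⟩
  have hg3 : (X 3 : MvPolynomial (Fin 4) K) ∣ g :=
    ((primeX 3).2.2 _ _ h3).resolve_left X3_not_dvd_add
  obtain ⟨g', hg'⟩ := hg3
  have heq : ps f = (X 2 * X 3) * g' := by rw [hg, hg']; ring
  have hmem : ps f ∈ Ideal.span ({X 0, X 1, X 2 * X 3} : Set (MvPolynomial (Fin 4) K)) := by
    rw [heq]
    exact Ideal.mul_mem_right _ _ (Ideal.subset_span (by simp))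
  have hsub : f - ps f ∈ Ideal.span ({X 0, X 1, X 2 * X 3} : Set (MvPolynomial (Fin 4) K)) := by
    apply sub_aeval_mem
    intro i
    fin_cases i
    · simpa [hb3, ps] using Ideal.subset_span
        (s := ({X 0, X 1, X 2 * X 3} : Set (MvPolynomial (Fin 4) K)))
        (show (X 0 : MvPolynomial (Fin 4) K) ∈ _ by simp)
    · simpa [hb3, ps] using Ideal.subset_span
        (s := ({X 0, X 1, X 2 * X 3} : Set (MvPolynomial (Fin 4) K)))
        (show (X 1 : MvPolynomial (Fin 4) K) ∈ _ by simp)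
    all_goals simp [hb3, ps]
  have := Ideal.add_mem _ hsub hmem
  simpa using this

lemma L4 : Ideal.span ({X 0 * X 1 - X 2 * X 3, X 0, X 1, X 2 + X 3} : Set (MvPolynomial (Fin 4) K)) ≠ ⊤ := by
  intro htop
  have hle : Ideal.span ({X 0 * X 1 - X 2 * X 3, X 0, X 1, X 2 + X 3} : Set (MvPolynomial (Fin 4) K))
      ≤ RingHom.ker (constantCoeff : MvPolynomial (Fin 4) K →+* K) := by
    rw [Ideal.span_le]
    rintro g (rfl | rfl | rfl | rfl) <;> simp [RingHom.mem_ker]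
  have : (1 : MvPolynomial (Fin 4) K) ∈ RingHom.ker (constantCoeff : MvPolynomial (Fin 4) K →+* K) :=
    hle (htop ▸ Submodule.mem_top)
  simp [RingHom.mem_ker] at this

lemma isSMulRegular_quot {R : Type*} [CommRing R] (I : Ideal R) (s : R)
    (h : ∀ r, s * r ∈ I → r ∈ I) : IsSMulRegular (R ⧸ I) s := by
  intro a b hab
  obtain ⟨a, rfl⟩ := Ideal.Quotient.mk_surjective a
  obtain ⟨b, rfl⟩ := Ideal.Quotient.mk_surjective b
  have hs : ∀ c, s • (Ideal.Quotient.mk I c) = Ideal.Quotient.mk I (s * c) := fun c => rfl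
  beta_reduce at hab
  rw [hs, hs, Ideal.Quotient.eq] at hab
  rw [Ideal.Quotient.eq]
  exact h _ (by rwa [mul_sub])

lemma mk_mem_map_iff {S : Type*} [CommRing S] (J I : Ideal S) (g : S) :
    Ideal.Quotient.mk J g ∈ I.map (Ideal.Quotient.mk J) ↔ g ∈ I ⊔ J := by
  rw [← Ideal.mem_comap, Ideal.comap_map_of_surjective _ Ideal.Quotient.mk_surjective,
    ← RingHom.ker_eq_comap_bot, Ideal.mk_ker]

end Aux

set_option maxHeartbeats 1000000 in
/-- In `R = K[X,Y,U,V]/(XY - UV)`, the elements `x, y, u+v` form a regular sequence. -/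
theorem regular_sequence_x_y_uv (K : Type) [Field K]
    (x y u v : hypersurfaceRing K)
    (hx : x = Ideal.Quotient.mk _ (X 0)) (hy : y = Ideal.Quotient.mk _ (X 1))
    (hu : u = Ideal.Quotient.mk _ (X 2)) (hv : v = Ideal.Quotient.mk _ (X 3)) :
    IsRegularSeq (hypersurfaceRing K) [x, y, u + v] := by
  subst hx hy hu hv
  set S := MvPolynomial (Fin 4) K with hS
  set p : MvPolynomial (Fin 4) K := X 0 * X 1 - X 2 * X 3 with hp
  set J : Ideal (MvPolynomial (Fin 4) K) := Ideal.span {p} with hJ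
  set mk := Ideal.Quotient.mk J with hmk
  constructor
  · intro i
    fin_cases i
    · -- x regular
      show IsSMulRegular (hypersurfaceRing K ⧸
        Ideal.span {a | a ∈ List.take 0 [mk (X 0), mk (X 1), mk (X 2) + mk (X 3)]}) (mk (X 0))
      have hset : {a | a ∈ List.take 0 [mk (X 0), mk (X 1), mk (X 2) + mk (X 3)]}
          = (∅ : Set (hypersurfaceRing K)) := by ext a; simp
      rw [hset, Ideal.span_empty]
      apply isSMulRegular_quot
      intro r hr
      obtain ⟨g, rfl⟩ := Ideal.Quotient.mk_surjective r
      rw [Ideal.mem_bot, ← map_mul, Ideal.Quotient.eq_zero_iff_mem] at hr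
      rw [Ideal.mem_bot, Ideal.Quotient.eq_zero_iff_mem]
      exact L1 g hr
    · -- y regular
      show IsSMulRegular (hypersurfaceRing K ⧸
        Ideal.span {a | a ∈ List.take 1 [mk (X 0), mk (X 1), mk (X 2) + mk (X 3)]}) (mk (X 1))
      have hset : {a | a ∈ List.take 1 [mk (X 0), mk (X 1), mk (X 2) + mk (X 3)]}
          = ({mk (X 0)} : Set (hypersurfaceRing K)) := by ext a; simp
      rw [hset]
      have hmap : Ideal.span ({mk (X 0)} : Set (hypersurfaceRing K))
          = (Ideal.span ({X 0} : Set (MvPolynomial (Fin 4) K))).map mk := by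
        rw [Ideal.map_span, Set.image_singleton]
      have hsup : Ideal.span ({X 0} : Set (MvPolynomial (Fin 4) K)) ⊔ J
          = Ideal.span ({p, X 0} : Set (MvPolynomial (Fin 4) K)) := by
        rw [← Ideal.span_union, Set.singleton_union, ← Set.singleton_union,
          Set.union_comm, Set.singleton_union]
      rw [hmap]
      apply isSMulRegular_quot
      intro r hr
      obtain ⟨g, rfl⟩ := Ideal.Quotient.mk_surjective r
      rw [← map_mul, mk_mem_map_iff, hsup] at hr
      rw [mk_mem_map_iff, hsup]
      exact L2 g hr
    · -- u+v regular
      show IsSMulRegular (hypersurfaceRing K ⧸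
        Ideal.span {a | a ∈ List.take 2 [mk (X 0), mk (X 1), mk (X 2) + mk (X 3)]}) (mk (X 2) + mk (X 3))
      have hset : {a | a ∈ List.take 2 [mk (X 0), mk (X 1), mk (X 2) + mk (X 3)]}
          = ({mk (X 0), mk (X 1)} : Set (hypersurfaceRing K)) := by ext a; simp
      rw [hset]
      have hmap : Ideal.span ({mk (X 0), mk (X 1)} : Set (hypersurfaceRing K))
          = (Ideal.span ({X 0, X 1} : Set (MvPolynomial (Fin 4) K))).map mk := by
        rw [Ideal.map_span, Set.image_insert_eq, Set.image_singleton]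
      have hsup : Ideal.span ({X 0, X 1} : Set (MvPolynomial (Fin 4) K)) ⊔ J
          = Ideal.span ({p, X 0, X 1} : Set (MvPolynomial (Fin 4) K)) := by
        rw [← Ideal.span_union]
        congr 1
        ext a
        simp only [Set.mem_union, Set.mem_insert_iff, Set.mem_singleton_iff]
        tauto
      rw [hmap]
      apply isSMulRegular_quot
      intro r hr
      obtain ⟨g, rfl⟩ := Ideal.Quotient.mk_surjective r
      rw [show mk (X 2) + mk (X 3) = mk (X 2 + X 3) from (map_add mk _ _).symm,
        ← map_mul, mk_mem_map_iff, hsup] at hr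
      rw [mk_mem_map_iff, hsup]
      exact L3 g hr
  · -- nontrivial
    have hset : {a | a ∈ [mk (X 0), mk (X 1), mk (X 2) + mk (X 3)]}
        = ({mk (X 0), mk (X 1), mk (X 2) + mk (X 3)} : Set (hypersurfaceRing K)) := by
      ext a; simp
    rw [hset]
    apply Ideal.Quotient.nontrivial_iff.mpr
    intro htop
    have hmap : Ideal.span ({mk (X 0), mk (X 1), mk (X 2) + mk (X 3)} : Set (hypersurfaceRing K))
        = (Ideal.span ({X 0, X 1, X 2 + X 3} : Set (MvPolynomial (Fin 4) K))).map mk := by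
      rw [Ideal.map_span, Set.image_insert_eq, Set.image_insert_eq, Set.image_singleton, map_add]
    have h1 : (1 : hypersurfaceRing K)
        ∈ (Ideal.span ({X 0, X 1, X 2 + X 3} : Set (MvPolynomial (Fin 4) K))).map mk := by
      rw [← hmap]; exact (Ideal.eq_top_iff_one _).1 htop
    rw [show (1 : hypersurfaceRing K) = mk 1 from (map_one mk).symm, mk_mem_map_iff] at h1
    have hsup : Ideal.span ({X 0, X 1, X 2 + X 3} : Set (MvPolynomial (Fin 4) K)) ⊔ J
        = Ideal.span ({p, X 0, X 1, X 2 + X 3} : Set (MvPolynomial (Fin 4) K)) := by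
      rw [← Ideal.span_union]
      congr 1
      ext a
      simp only [Set.mem_union, Set.mem_insert_iff, Set.mem_singleton_iff]
      tauto
    rw [hsup] at h1
    exact L4 ((Ideal.eq_top_iff_one _).2 h1)
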